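/- arXiv:0803.1736 — 4 statements merged into one kernel-verified Lean document; each statement's English description precedes it below -/
import Mathlib

section
/- Let ρ: ℝ → ℝ≥0 be even, nondecreasing on [0,∞), continuous at 0 with ρ(0)=0, and bounded with sup ρ = a. For a probability measure F on ℝ define S(F) = inf{s > 0 : E_F[ρ(x/s)] < b} for some fixed 0 < b < a. Then for every K > 0 and every C > b/a there exists K' > 0 such that for any probability measure F with P_F(|x| > K') > C one has S(F) > K. -/
open MeasureTheory Filter Set

/-- The M-scale functional `S(F) = inf {s > 0 : E_F[ρ(x/s)] < b}`. -/
noncomputable def Mscale (ρ : ℝ → ℝ) (b : ℝ) (F : Measure ℝ) : ℝ :=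
  sInf {s : ℝ | 0 < s ∧ ∫ x, ρ (x / s) ∂F < b}

/-- Lemma A.1(a): if `F` puts mass more than `C > b/a` outside `[-K', K']` for suitable `K'`,
then the M-scale exceeds `K`. -/
theorem mscale_large_of_tail_mass (ρ : ℝ → ℝ) (a b : ℝ)
    (hnonneg : ∀ u, 0 ≤ ρ u) (hρ0 : ρ 0 = 0) (hcont : ContinuousAt ρ 0)
    (heven : ∀ u, ρ (-u) = ρ u) (hmono : MonotoneOn ρ (Set.Ici 0))
    (hsup : IsLUB (Set.range ρ) a) (hb : 0 < b) (hba : b < a) :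
    ∀ K > (0:ℝ), ∀ C > b / a, ∃ K' > (0:ℝ), ∀ F : Measure ℝ, IsProbabilityMeasure F →
      C < (F {x : ℝ | K' < |x|}).toReal → K < Mscale ρ b F := by
  intro K hK C hC
  have ha : 0 < a := lt_trans hb hba
  have hC0 : 0 < C := lt_trans (div_pos hb ha) hC
  have hbC : b < C * a := (div_lt_iff₀ ha).mp hC
  have hbCa : b / C < a := by rw [div_lt_iff₀ hC0]; linarith [mul_comm C a]
  obtain ⟨u, hu⟩ : ∃ u, b / C < ρ u := by
    by_contra h
    push_neg at h
    have : a ≤ b / C := hsup.2 (by rintro y ⟨u, rfl⟩; exact h u)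
    linarith
  set u₀ := |u| with hu₀def
  have hρu₀ : b / C < ρ u₀ := by
    rcases le_or_gt 0 u with h1 | h1
    · rwa [hu₀def, abs_of_nonneg h1]
    · rw [hu₀def, abs_of_neg h1, heven]; exact hu
  have hu₀pos : 0 < u₀ := by
    rcases (abs_nonneg u).lt_or_eq with h | h
    · exact h
    · exfalso
      rw [hu₀def, ← h, hρ0] at hρu₀
      have := div_pos hb hC0
      linarith
  refine ⟨2 * K * u₀, by positivity, ?_⟩
  intro F hF hFtail
  have hψ : Monotone (fun t => ρ (max t 0)) := fun x y hxy =>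
    hmono (le_max_right x 0) (le_max_right y 0) (max_le_max hxy le_rfl)
  have hρmeas : Measurable ρ := by
    have hρeq : ρ = (fun t => ρ (max t 0)) ∘ abs := by
      funext x
      rcases le_or_gt 0 x with h | h
      · simp [abs_of_nonneg h, max_eq_left h]
      · simp only [Function.comp_apply, abs_of_neg h,
          max_eq_left (by linarith : (0:ℝ) ≤ -x), heven]
    rw [hρeq]
    exact hψ.measurable.comp measurable_abs
  have hbound : ∀ v, ρ v ≤ a := fun v => hsup.1 ⟨v, rfl⟩
  have hInt : ∀ s : ℝ, Integrable (fun x => ρ (x / s)) F := by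
    intro s
    refine ⟨(hρmeas.comp (measurable_id.div_const s)).aestronglyMeasurable, ?_⟩
    apply HasFiniteIntegral.of_bounded (C := a)
    filter_upwards with x
    rw [Real.norm_eq_abs, abs_of_nonneg (hnonneg _)]
    exact hbound _
  have hne : {s : ℝ | 0 < s ∧ ∫ x, ρ (x / s) ∂F < b}.Nonempty := by
    have hlim : Tendsto (fun n : ℕ => ∫ x, ρ (x / (n + 1)) ∂F) atTop (nhds 0) := by
      have h0 : (0:ℝ) = ∫ _x, (0:ℝ) ∂F := by simp
      rw [h0]
      apply tendsto_integral_of_dominated_convergence (fun _ => a)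
      · intro n; exact (hInt _).1
      · exact integrable_const a
      · intro n
        filter_upwards with x
        rw [Real.norm_eq_abs, abs_of_nonneg (hnonneg _)]
        exact hbound _
      · filter_upwards with x
        have h1 : Tendsto (fun n : ℕ => x / ((n : ℝ) + 1)) atTop (nhds 0) := by
          have h2 := tendsto_one_div_add_atTop_nhds_zero_nat.const_mul x
          simpa [div_eq_mul_inv, mul_comm] using h2
        have h3 := hcont.tendsto.comp h1
        simpa [hρ0, Function.comp_def] using h3
    obtain ⟨n, hn⟩ := (hlim.eventually (eventually_lt_nhds hb)).exists
    exact ⟨(n : ℝ) + 1, by positivity, hn⟩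
  have hlb : ∀ s ∈ {s : ℝ | 0 < s ∧ ∫ x, ρ (x / s) ∂F < b}, 2 * K ≤ s := by
    rintro s ⟨hs, hint⟩
    by_contra hcon
    push_neg at hcon
    have hset : MeasurableSet {x : ℝ | 2 * K * u₀ < |x|} :=
      measurableSet_lt measurable_const measurable_abs
    have key : ∀ x ∈ {x : ℝ | 2 * K * u₀ < |x|}, b / C ≤ ρ (x / s) := by
      intro x hx
      have hx' : 2 * K * u₀ < |x| := hx
      have h1 : u₀ ≤ |x / s| := by
        rw [abs_div, abs_of_pos hs, le_div_iff₀ hs]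
        nlinarith
      have h2 : ρ u₀ ≤ ρ |x / s| := hmono (Set.mem_Ici.mpr hu₀pos.le) (Set.mem_Ici.mpr (abs_nonneg _)) h1
      have he : ρ |x / s| = ρ (x / s) := by
        rcases le_or_gt 0 (x / s) with h | h
        · rw [abs_of_nonneg h]
        · rw [abs_of_neg h, heven]
      linarith
    have h2 : (b / C) * (F {x : ℝ | 2 * K * u₀ < |x|}).toReal ≤
        ∫ x in {x : ℝ | 2 * K * u₀ < |x|}, ρ (x / s) ∂F :=
      setIntegral_ge_of_const_le_real hset (measure_ne_top F _) key (hInt s).integrableOn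
    have h3 : ∫ x in {x : ℝ | 2 * K * u₀ < |x|}, ρ (x / s) ∂F ≤ ∫ x, ρ (x / s) ∂F :=
      setIntegral_le_integral (hInt s) (by filter_upwards with x using hnonneg _)
    have h4 : b < (b / C) * (F {x : ℝ | 2 * K * u₀ < |x|}).toReal := by
      have h5 := mul_lt_mul_of_pos_left hFtail (div_pos hb hC0)
      have hbc : b / C * C = b := div_mul_cancel₀ b hC0.ne'
      linarith
    linarith
  have hfin : 2 * K ≤ Mscale ρ b F := le_csInf hne hlb
  linarith
end

section
/- Let ρ: ℝ → ℝ≥0 be even, nondecreasing on [0,∞), continuous at 0 with ρ(0)=0, and bounded with sup ρ = a. Define S(F)=inf{s>0 : E_F[ρ(x/s)]<b} for fixed 0<b<a. Then for every M > 0 and every C < b/a there exists M' > 0 such that for any probability measure F with P_F(|x| > M) < C one has S(F) < M'. -/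
open MeasureTheory Filter Set

/-- Lemma A.1(b): if `F` puts mass less than `C < b/a` outside `[-M, M]`,
then the M-scale is bounded by some `M'` depending only on `M` and `C`. -/
theorem mscale_bounded_of_small_tail (ρ : ℝ → ℝ) (a b : ℝ)
    (hnonneg : ∀ u, 0 ≤ ρ u) (hρ0 : ρ 0 = 0) (hcont : ContinuousAt ρ 0)
    (heven : ∀ u, ρ (-u) = ρ u) (hmono : MonotoneOn ρ (Set.Ici 0))
    (hsup : IsLUB (Set.range ρ) a) (hb : 0 < b) (hba : b < a) :
    ∀ M > (0:ℝ), ∀ C < b / a, ∃ M' > (0:ℝ), ∀ F : Measure ℝ, IsProbabilityMeasure F →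
      (F {x : ℝ | M < |x|}).toReal < C → Mscale ρ b F < M' := by
  intro M hM C hC
  have ha : 0 < a := hb.trans hba
  have hCa : C * a < b := (lt_div_iff₀ ha).1 hC
  have habs : ∀ u, ρ u = ρ |u| := by
    intro u
    rcases le_or_gt 0 u with h | h
    · rw [abs_of_nonneg h]
    · rw [abs_of_neg h, heven]
  -- continuity at 0 gives δ
  have hcont' := Metric.continuousAt_iff.1 hcont (b - C * a) (by linarith)
  obtain ⟨δ, hδ, hδ'⟩ := hcont'
  set s : ℝ := M / δ + 1 with hs_def
  have hs0 : 0 < s := by positivity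
  have hMs : M / s < δ := by
    rw [div_lt_iff₀ hs0]
    have : M / δ < s := by simp [hs_def]
    calc M = (M / δ) * δ := by field_simp
    _ < δ * s := by nlinarith
  have hε : ρ (M / s) < b - C * a := by
    have := hδ' (x := M / s) (by
      simp only [Real.dist_eq, sub_zero]
      rwa [abs_of_nonneg (by positivity)])
    rw [Real.dist_eq, hρ0, sub_zero, abs_of_nonneg (hnonneg _)] at this
    linarith
  set ε := ρ (M / s) with hε_def
  have hε0 : 0 ≤ ε := hnonneg _
  have hub : ∀ u, ρ u ≤ a := fun u => hsup.1 ⟨u, rfl⟩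
  refine ⟨s + 1, by linarith, fun F hF htail => ?_⟩
  set T : Set ℝ := {x : ℝ | M < |x|} with hT_def
  have hTmeas : MeasurableSet T := measurableSet_lt measurable_const continuous_abs.measurable
  have hpt : ∀ x, ρ (x / s) ≤ ε + T.indicator (fun _ => a) x := by
    intro x
    by_cases hx : x ∈ T
    · rw [Set.indicator_of_mem hx]
      calc ρ (x / s) ≤ a := hub _
      _ ≤ ε + a := by linarith
    · rw [Set.indicator_of_notMem hx, add_zero]
      have hxM : |x| ≤ M := le_of_not_gt hx
      rw [habs]
      apply hmono (Set.mem_Ici.2 (abs_nonneg _)) (Set.mem_Ici.2 (by positivity))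
      rw [abs_div, abs_of_pos hs0]
      exact div_le_div_of_nonneg_right hxM hs0.le
  have hint_lt : ∫ x, ρ (x / s) ∂F < b := by
    by_cases hint : Integrable (fun x => ρ (x / s)) F
    · have hind : Integrable (fun x => ε + T.indicator (fun _ => a) x) F :=
        (integrable_const ε).add ((integrable_const a).indicator hTmeas)
      have h1 : ∫ x, ρ (x / s) ∂F ≤ ∫ x, (ε + T.indicator (fun _ => a) x) ∂F :=
        integral_mono hint hind hpt
      have h2 : ∫ x, (ε + T.indicator (fun _ => a) x) ∂F
          = ε + (F T).toReal * a := by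
        rw [integral_add (integrable_const ε) ((integrable_const a).indicator hTmeas),
          integral_const, integral_indicator_const _ hTmeas]
        simp [hF.measure_univ, Measure.real]
      have h3 : (F T).toReal * a < C * a := by
        exact mul_lt_mul_of_pos_right htail ha
      linarith
    · rw [integral_undef hint]; exact hb
  have hmem : s ∈ {s : ℝ | 0 < s ∧ ∫ x, ρ (x / s) ∂F < b} := ⟨hs0, hint_lt⟩
  have hbdd : BddBelow {s : ℝ | 0 < s ∧ ∫ x, ρ (x / s) ∂F < b} :=
    ⟨0, fun x hx => hx.1.le⟩
  calc Mscale ρ b F ≤ s := csInf_le hbdd hmem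
  _ < s + 1 := by linarith
end

section
/- Let F, G: ℝ → [0,1] be distribution functions, and let a ∈ ℝ. Then for all b ≤ a with G(a) < 1 and F(a) < 1, one has |(G(a)-G(b))/(1-G(b)) - (F(a)-F(b))/(1-F(b))| ≤ 4·sup_{t∈ℝ}|G(t)-F(t)| / ((1-G(a))(1-F(a))). -/
open Set

/-- Inequality (A.3): the difference of conditional tail probabilities under two distribution
functions is controlled by their Kolmogorov distance. -/
theorem cond_tail_prob_diff_le (F G : ℝ → ℝ) (a : ℝ)
    (hF : Monotone F) (hG : Monotone G)
    (hF01 : ∀ t, F t ∈ Set.Icc (0:ℝ) 1) (hG01 : ∀ t, G t ∈ Set.Icc (0:ℝ) 1)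
    (hFa : F a < 1) (hGa : G a < 1) :
    ∀ b ≤ a,
      |(G a - G b) / (1 - G b) - (F a - F b) / (1 - F b)| ≤
        4 * (⨆ t : ℝ, |G t - F t|) / ((1 - G a) * (1 - F a)) := by
  intro b hb
  set D := ⨆ t : ℝ, |G t - F t| with hDdef
  have hbdd : BddAbove (Set.range fun t => |G t - F t|) := by
    refine ⟨1, ?_⟩
    rintro x ⟨t, rfl⟩
    have h1 := hF01 t; have h2 := hG01 t
    rw [abs_sub_le_iff]
    constructor <;> [linarith [h1.1, h2.2]; linarith [h1.2, h2.1]]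
  have hDa : |G a - F a| ≤ D := le_ciSup hbdd a
  have hDb : |G b - F b| ≤ D := le_ciSup hbdd b
  have hD0 : 0 ≤ D := le_trans (abs_nonneg _) hDa
  have hGb : G b ≤ G a := hG hb
  have hFb : F b ≤ F a := hF hb
  have hu : 0 < 1 - G b := by linarith
  have hv : 0 < 1 - F b := by linarith
  have hga : 0 < 1 - G a := by linarith
  have hfa : 0 < 1 - F a := by linarith
  rw [div_sub_div _ _ (ne_of_gt hu) (ne_of_gt hv), abs_div, abs_of_pos (mul_pos hu hv)]
  have hnum : |(G a - G b) * (1 - F b) - (1 - G b) * (F a - F b)| ≤ 2 * D := by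
    have hkey : (G a - G b) * (1 - F b) - (1 - G b) * (F a - F b)
        = (G a - F a) * (1 - F b) - (G b - F b) * (1 - F a) := by ring
    rw [hkey]
    have h1 : |(G a - F a) * (1 - F b)| ≤ D := by
      rw [abs_mul, abs_of_pos hv]
      nlinarith [(hF01 b).1, abs_nonneg (G a - F a)]
    have h2 : |(G b - F b) * (1 - F a)| ≤ D := by
      rw [abs_mul, abs_of_pos hfa]
      nlinarith [(hF01 a).1, abs_nonneg (G b - F b)]
    calc |(G a - F a) * (1 - F b) - (G b - F b) * (1 - F a)|
        ≤ |(G a - F a) * (1 - F b)| + |(G b - F b) * (1 - F a)| := abs_sub _ _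
      _ ≤ 2 * D := by linarith
  calc |(G a - G b) * (1 - F b) - (1 - G b) * (F a - F b)| / ((1 - G b) * (1 - F b))
      ≤ (2 * D) / ((1 - G a) * (1 - F a)) := by
        apply div_le_div₀ (by linarith) hnum (mul_pos hga hfa)
        nlinarith
    _ ≤ 4 * D / ((1 - G a) * (1 - F a)) := by
        gcongr
        linarith
end

section
/- Let ρ satisfy P1–P4 with sup ρ = a, let 0 < b < a, and let H*_n be a sequence of discrete distributions on ℝ, each giving mass at least 1/n to each of at least n(1 − b/a) + 1 points lying in a fixed bounded interval [−M, M]. Then the M-scales s_n defined by E_{H*_n}[ρ(u/s_n)] = b satisfy sup_n s_n < ∞. -/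
open MeasureTheory Set

/-- Uniform boundedness of M-scales (A.15): if each distribution in a sequence gives mass at
least `1/n` to each of more than `n(1 - b/a)` points lying in a fixed bounded interval
`[-M, M]`, then the corresponding M-scales (with target `b`, `0 < b < a = sup ρ`) are
uniformly bounded. -/
theorem mscales_uniformly_bounded (ρ : ℝ → ℝ) (a b M : ℝ)
    (hnonneg : ∀ u, 0 ≤ ρ u) (hρ0 : ρ 0 = 0) (hcont : ContinuousAt ρ 0)
    (heven : ∀ u, ρ (-u) = ρ u) (hmono : MonotoneOn ρ (Set.Ici 0))
    (hsup : IsLUB (Set.range ρ) a) (hb : 0 < b) (hba : b < a)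
    (n : ℕ) (hn : 0 < n)
    (H : ℕ → Measure ℝ) (hprob : ∀ j, IsProbabilityMeasure (H j))
    (hmass : ∀ j, ∃ T : Finset ℝ, (n : ℝ) * (1 - b / a) + 1 ≤ T.card ∧
      (∀ t ∈ T, |t| ≤ M) ∧ ∀ t ∈ T, (1 : ℝ) / n ≤ ((H j) {t}).toReal)
    (s : ℕ → ℝ)
    (hs : ∀ j, s j = sInf {σ : ℝ | 0 < σ ∧ ∫ x, ρ (x / σ) ∂(H j) < b}) :
    BddAbove (Set.range s) := by
  have ha : 0 < a := hb.trans hba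
  have hn1 : (1 : ℝ) ≤ (n : ℝ) := by exact_mod_cast hn
  have hnpos : (0 : ℝ) < (n : ℝ) := by positivity
  have hρa : ∀ u, ρ u ≤ a := fun u => hsup.1 ⟨u, rfl⟩
  have hρabs : ∀ u, ρ u = ρ |u| := by
    intro u
    rcases abs_choice u with h | h
    · rw [h]
    · rw [h, heven]
  obtain ⟨δ, hδpos, hδ⟩ := Metric.continuousAt_iff.mp hcont (a / n) (by positivity)
  set σ₀ : ℝ := max 1 (2 * M / δ) with hσ₀def
  have hσ₀1 : (1 : ℝ) ≤ σ₀ := le_max_left _ _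
  have hσ₀pos : (0 : ℝ) < σ₀ := lt_of_lt_of_le one_pos hσ₀1
  have key : ∀ j, s j ≤ σ₀ := by
    intro j
    haveI := hprob j
    obtain ⟨T, hcard, hTM, hTmass⟩ := hmass j
    have hTne : T.Nonempty := by
      rw [← Finset.card_pos]
      by_contra h
      push_neg at h
      interval_cases h' : T.card
      · simp only [Nat.cast_zero] at hcard
        nlinarith [div_lt_one ha |>.mpr hba, mul_pos hnpos (sub_pos.mpr ((div_lt_one ha).mpr hba))]
    have hM0 : 0 ≤ M := by
      obtain ⟨t, ht⟩ := hTne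
      exact (abs_nonneg t).trans (hTM t ht)
    -- bound on ρ (M / σ₀)
    have hMσnonneg : 0 ≤ M / σ₀ := div_nonneg hM0 hσ₀pos.le
    have hMσ : ρ (M / σ₀) < a / n := by
      have hdist : dist (M / σ₀) 0 < δ := by
        rw [Real.dist_eq, sub_zero, abs_of_nonneg hMσnonneg]
        rcases eq_or_lt_of_le hM0 with h | h
        · simpa [← h] using hδpos
        · have h2M : 0 < 2 * M / δ := by positivity
          calc M / σ₀ ≤ M / (2 * M / δ) :=
                div_le_div_of_nonneg_left hM0 h2M (le_max_right _ _)
            _ = δ / 2 := by field_simp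
            _ < δ := by linarith
      have := hδ hdist
      rw [hρ0, Real.dist_eq, sub_zero, abs_of_nonneg (hnonneg _)] at this
      exact this
    -- mass of T
    set h : ℝ := ((H j) ↑T).toReal with hhdef
    have hTmeas : MeasurableSet (↑T : Set ℝ) := T.measurableSet
    have hHT : (H j) ↑T = ∑ t ∈ T, (H j) {t} := by
      have hT : (↑T : Set ℝ) = ⋃ t ∈ T, {t} := (Set.biUnion_of_singleton (↑T : Set ℝ)).symm
      rw [hT, measure_biUnion_finset]
      · intro x _ y _ hxy
        simp [Set.disjoint_singleton, hxy]
      · intro t _; exact measurableSet_singleton t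
    have hh1 : h ≤ 1 := by
      have hle1 : (H j) ↑T ≤ 1 := prob_le_one
      calc h ≤ (1 : ENNReal).toReal := ENNReal.toReal_mono ENNReal.one_ne_top hle1
        _ = 1 := by simp
    have hhlow : 1 - b / a + 1 / n ≤ h := by
      have hfin : ∀ t ∈ T, (H j) {t} ≠ ⊤ := fun t _ => measure_ne_top _ _
      have hsum : h = ∑ t ∈ T, ((H j) {t}).toReal := by
        rw [hhdef, hHT, ENNReal.toReal_sum hfin]
      have hge : (T.card : ℝ) * (1 / n) ≤ ∑ t ∈ T, ((H j) {t}).toReal := by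
        have : (T.card : ℝ) * (1 / n) = ∑ _t ∈ T, (1 : ℝ) / n := by
          rw [Finset.sum_const, nsmul_eq_mul]
        rw [this]
        exact Finset.sum_le_sum hTmass
      have : ((n : ℝ) * (1 - b / a) + 1) * (1 / n) ≤ (T.card : ℝ) * (1 / n) := by
        apply mul_le_mul_of_nonneg_right hcard (by positivity)
      rw [hsum]
      calc 1 - b / a + 1 / n = ((n : ℝ) * (1 - b / a) + 1) * (1 / n) := by
            field_simp
        _ ≤ (T.card : ℝ) * (1 / n) := this
        _ ≤ _ := hge
    have hh0 : 0 ≤ h := ENNReal.toReal_nonneg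
    -- the integral at σ₀ is < b
    set c : ℝ := ρ (M / σ₀) with hcdef
    have hc0 : 0 ≤ c := hnonneg _
    have hintlt : ∫ x, ρ (x / σ₀) ∂(H j) < b := by
      by_cases hInt : Integrable (fun x => ρ (x / σ₀)) (H j)
      · set g : ℝ → ℝ := fun x => a + Set.indicator (↑T) (fun _ => c - a) x with hg
        have hgInt : Integrable g (H j) := by
          apply (integrable_const a).add
          exact (integrable_const (c - a)).indicator hTmeas
        have hle : ∀ x, ρ (x / σ₀) ≤ g x := by
          intro x
          by_cases hx : x ∈ (↑T : Set ℝ)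
          · have : g x = c := by simp [hg, Set.indicator_of_mem hx]
            rw [this, hρabs (x / σ₀)]
            apply hmono (Set.mem_Ici.mpr (abs_nonneg _)) (Set.mem_Ici.mpr hMσnonneg)
            rw [abs_div, abs_of_pos hσ₀pos]
            gcongr
            exact hTM x hx
          · have : g x = a := by simp [hg, Set.indicator_of_notMem hx]
            rw [this]; exact hρa _
        have hgint : ∫ x, g x ∂(H j) = a + (c - a) * h := by
          rw [hg]
          rw [integral_add (integrable_const a) ((integrable_const (c - a)).indicator hTmeas)]
          rw [integral_const, integral_indicator_const _ hTmeas]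
          simp [hhdef, mul_comm, Measure.real]
        calc ∫ x, ρ (x / σ₀) ∂(H j) ≤ ∫ x, g x ∂(H j) :=
              integral_mono hInt hgInt hle
          _ = a + (c - a) * h := hgint
          _ < b := by
              have e1 : a * (1 - b / a + 1 / n) ≤ a * h :=
                mul_le_mul_of_nonneg_left hhlow ha.le
              have e2 : c * h ≤ c := by nlinarith
              have e3 : a * (1 - b / a + 1 / n) = a - b + a / n := by
                field_simp
              have e4 : c < a / n := hMσ
              nlinarith [e1, e2, e3, e4]
      · rw [integral_undef hInt]; exact hb
    rw [hs j]
    apply csInf_le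
    · exact ⟨0, fun x hx => hx.1.le⟩
    · exact ⟨hσ₀pos, hintlt⟩
  refine ⟨σ₀, ?_⟩
  rintro x ⟨j, rfl⟩
  exact key j
end
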